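/- Let H be an inner product space over 𝕂 ∈ {ℝ,ℂ}, x₁,…,xₙ ∈ H, α₁,…,αₙ ∈ 𝕂, and (p₁,…,pₙ) a probability vector. If x, X ∈ H satisfy Re⟨X − xᵢ, xᵢ − x⟩ ≥ 0 for all i (equivalently ‖xᵢ − (x+X)/2‖ ≤ (1/2)‖X − x‖), then ‖Σᵢ pᵢαᵢxᵢ − (Σᵢ pᵢαᵢ)(Σᵢ pᵢxᵢ)‖ ≤ (1/2)‖X−x‖ Σᵢ pᵢ|αᵢ − Σⱼ pⱼαⱼ| ≤ (1/2)‖X−x‖ (Σᵢ pᵢ|αᵢ|² − |Σᵢ pᵢαᵢ|²)^{1/2}. -/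

import Mathlib

open Finset RCLike


/-- Grüss type inequality in an inner product space H over 𝕂 ∈ {ℝ,ℂ}: if the xᵢ satisfy
Re⟨X − xᵢ, xᵢ − x⟩ ≥ 0 for all i, then
‖Σᵢ pᵢαᵢxᵢ − (Σᵢ pᵢαᵢ)(Σᵢ pᵢxᵢ)‖ ≤ (1/2)‖X−x‖ Σᵢ pᵢ|αᵢ − Σⱼ pⱼαⱼ|
  ≤ (1/2)‖X−x‖ (Σᵢ pᵢ|αᵢ|² − |Σᵢ pᵢαᵢ|²)^{1/2}. -/
theorem stmt_15 {𝕂 : Type*} [RCLike 𝕂] {H : Type*} [NormedAddCommGroup H]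
    [InnerProductSpace 𝕂 H]
    (n : ℕ) (xv : Fin n → H) (α : Fin n → 𝕂)
    (p : Fin n → ℝ) (hp : ∀ i, 0 ≤ p i) (hp1 : ∑ i, p i = 1)
    (x X : H)
    (h : ∀ i, 0 ≤ RCLike.re (inner 𝕂 (X - xv i) (xv i - x) : 𝕂)) :
    ‖(∑ i, (p i : 𝕂) • (α i • xv i)) - (∑ i, (p i : 𝕂) * α i) • ∑ i, (p i : 𝕂) • xv i‖
      ≤ (1 / 2) * ‖X - x‖ * ∑ i, p i * ‖α i - ∑ j, (p j : 𝕂) * α j‖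
    ∧ (1 / 2) * ‖X - x‖ * ∑ i, p i * ‖α i - ∑ j, (p j : 𝕂) * α j‖
      ≤ (1 / 2) * ‖X - x‖ *
          Real.sqrt ((∑ i, p i * ‖α i‖ ^ 2) - ‖∑ i, (p i : 𝕂) * α i‖ ^ 2) := by
  set c : H := ((2:𝕂)⁻¹) • (x + X) with hc
  set A : 𝕂 := ∑ j, (p j : 𝕂) * α j with hA
  have hpsum : (∑ i, ((p i : 𝕂))) = 1 := by
    rw [← RCLike.ofReal_sum, hp1, RCLike.ofReal_one]
  -- radius bound
  have hr : ∀ i, ‖xv i - c‖ ≤ ‖X - x‖ / 2 := by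
    intro i
    have ha : X - xv i = ((2:𝕂)⁻¹) • (X - x) - (xv i - c) := by
      rw [hc]; module
    have hb : xv i - x = ((2:𝕂)⁻¹) • (X - x) + (xv i - c) := by
      rw [hc]; module
    have key : RCLike.re (inner 𝕂 (X - xv i) (xv i - x) : 𝕂)
        = ‖((2:𝕂)⁻¹) • (X - x)‖ ^ 2 - ‖xv i - c‖ ^ 2 := by
      rw [ha, hb, inner_sub_left, inner_add_right, inner_add_right, map_sub, map_add, map_add,
        inner_self_eq_norm_sq, inner_self_eq_norm_sq,
        inner_re_symm (((2:𝕂)⁻¹) • (X - x)) (xv i - c)]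
      ring
    have h2 : ‖((2:𝕂)⁻¹) • (X - x)‖ = ‖X - x‖ / 2 := by
      rw [norm_smul, norm_inv, RCLike.norm_ofNat]; ring
    have := h i
    rw [key, h2] at this
    nlinarith [norm_nonneg (xv i - c), norm_nonneg (X - x)]
  -- rewrite of the main sum
  have hS : (∑ i, (p i : 𝕂) • (α i • xv i)) - A • ∑ i, (p i : 𝕂) • xv i
      = ∑ i, (p i : 𝕂) • ((α i - A) • (xv i - c)) := by
    have h0 : (∑ i, ((p i : 𝕂) * (α i - A))) = 0 := by
      simp only [mul_sub, Finset.sum_sub_distrib, ← Finset.sum_mul, hpsum, ← hA]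
      ring
    have e : ∀ i ∈ Finset.univ, (p i : 𝕂) • ((α i - A) • (xv i - c))
        = (p i : 𝕂) • (α i • xv i) - A • ((p i : 𝕂) • xv i)
          - ((p i : 𝕂) * (α i - A)) • c := by
      intro i _; module
    rw [Finset.sum_congr rfl e, Finset.sum_sub_distrib, Finset.sum_sub_distrib,
      ← Finset.smul_sum, ← Finset.sum_smul, h0, zero_smul, sub_zero]
  have hXx : (0:ℝ) ≤ (1/2) * ‖X - x‖ := by positivity
  constructor
  · calc ‖(∑ i, (p i : 𝕂) • (α i • xv i)) - A • ∑ i, (p i : 𝕂) • xv i‖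
        = ‖∑ i, (p i : 𝕂) • ((α i - A) • (xv i - c))‖ := by rw [hS]
      _ ≤ ∑ i, ‖(p i : 𝕂) • ((α i - A) • (xv i - c))‖ := norm_sum_le _ _
      _ ≤ ∑ i, p i * ‖α i - A‖ * (‖X - x‖ / 2) := by
          apply Finset.sum_le_sum
          intro i _
          rw [norm_smul, norm_smul, RCLike.norm_ofReal, abs_of_nonneg (hp i), ← mul_assoc]
          exact mul_le_mul_of_nonneg_left (hr i) (mul_nonneg (hp i) (norm_nonneg _))
      _ = (1/2) * ‖X - x‖ * ∑ i, p i * ‖α i - A‖ := by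
          rw [Finset.mul_sum]; apply Finset.sum_congr rfl; intros; ring
  · apply mul_le_mul_of_nonneg_left _ hXx
    -- variance identity
    have hvar : ∑ i, p i * ‖α i - A‖ ^ 2 = (∑ i, p i * ‖α i‖ ^ 2) - ‖A‖ ^ 2 := by
      have hz : ∀ z : 𝕂, ‖z‖ ^ 2 = RCLike.re ((starRingEnd 𝕂) z * z) := by
        intro z; rw [RCLike.conj_mul]; exact_mod_cast rfl
      have e : ∀ i ∈ Finset.univ, p i * ‖α i - A‖ ^ 2
          = p i * ‖α i‖ ^ 2 - 2 * RCLike.re ((p i : 𝕂) * ((starRingEnd 𝕂) (α i) * A))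
            + p i * ‖A‖ ^ 2 := by
        intro i _
        rw [hz (α i - A), hz (α i), hz A, map_sub, sub_mul, mul_sub, mul_sub, map_sub,
          map_sub, RCLike.re_ofReal_mul]
        have h1 : RCLike.re ((starRingEnd 𝕂) A * α i)
            = RCLike.re ((starRingEnd 𝕂) (α i) * A) := by
          rw [← RCLike.conj_re ((starRingEnd 𝕂) A * α i), map_mul, RingHomCompTriple.comp_apply,
            RingHom.id_apply, mul_comm]
        rw [map_sub, h1]
        ring
      have h2 : ∑ i, RCLike.re ((p i : 𝕂) * ((starRingEnd 𝕂) (α i) * A))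
          = ‖A‖ ^ 2 := by
        rw [← map_sum]
        have : ∑ i, (p i : 𝕂) * ((starRingEnd 𝕂) (α i) * A)
            = (starRingEnd 𝕂) A * A := by
          rw [hA, map_sum, Finset.sum_mul]
          apply Finset.sum_congr rfl
          intro i _
          rw [map_mul, RCLike.conj_ofReal]; ring
        rw [this, RCLike.conj_mul]; exact_mod_cast rfl
      rw [Finset.sum_congr rfl e, Finset.sum_add_distrib, Finset.sum_sub_distrib,
        ← Finset.mul_sum, h2, ← Finset.sum_mul, hp1]
      ring
    have hnn : 0 ≤ ∑ i, p i * ‖α i - A‖ := by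
      apply Finset.sum_nonneg; intro i _; exact mul_nonneg (hp i) (norm_nonneg _)
    have h2nn : 0 ≤ ∑ i, p i * ‖α i - A‖ ^ 2 := by
      apply Finset.sum_nonneg; intro i _; exact mul_nonneg (hp i) (sq_nonneg _)
    rw [← hvar, Real.le_sqrt hnn h2nn]
    calc (∑ i, p i * ‖α i - A‖) ^ 2
        = (∑ i, Real.sqrt (p i) * (Real.sqrt (p i) * ‖α i - A‖)) ^ 2 := by
          congr 1; apply Finset.sum_congr rfl; intro i _
          rw [← mul_assoc, Real.mul_self_sqrt (hp i)]
      _ ≤ (∑ i, Real.sqrt (p i) ^ 2) * (∑ i, (Real.sqrt (p i) * ‖α i - A‖) ^ 2) :=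
          Finset.sum_mul_sq_le_sq_mul_sq _ _ _
      _ = ∑ i, p i * ‖α i - A‖ ^ 2 := by
          have : ∑ i, Real.sqrt (p i) ^ 2 = 1 := by
            rw [← hp1]; apply Finset.sum_congr rfl; intro i _; exact Real.sq_sqrt (hp i)
          rw [this, one_mul]; apply Finset.sum_congr rfl; intro i _
          rw [mul_pow, Real.sq_sqrt (hp i)]
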